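/- arXiv:2207.02580 — 2 statements merged into one kernel-verified Lean document; each statement's English description precedes it below -/
import Mathlib

section
/- (State evolution of the GPK algorithm.) Let f : 𝔽₂ⁿ → 𝔽₂ᵐ and y ∈ 𝔽₂ᵐ. Let H_k denote the Hadamard matrix indexed by 𝔽₂ᵏ × 𝔽₂ᵏ with entries H_k(z, x) = (1/√(2ᵏ))·(−1)^(x·z), let U_f be the linear operator on ℂ-valued functions on 𝔽₂ⁿ × 𝔽₂ᵐ given by (U_f g)(x, z) = g(x, z ⊕ f(x)), and let |0, y⟩ denote the basis vector supported at (0, y) ∈ 𝔽₂ⁿ × 𝔽₂ᵐ. Then the state (H_n ⊗ I) U_f (H_n ⊗ H_m) |0, y⟩ has components, at each (z, w) ∈ 𝔽₂ⁿ × 𝔽₂ᵐ, equal to [ (1/2ⁿ) Σ_{x ∈ 𝔽₂ⁿ} (−1)^( (f(x)·y) ⊕ (x·z) ) ] · (1/√(2ᵐ))·(−1)^(y·w). -/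
/-- The sign `(−1)^a ∈ ℂ` associated to a bit `a ∈ 𝔽₂`. -/
noncomputable def sgn (a : ZMod 2) : ℂ := (-1 : ℂ) ^ a.val

/-- The pairing `x·z = Σᵢ xᵢ·zᵢ ∈ 𝔽₂` of two binary strings. -/
def dotp {k : ℕ} (x z : Fin k → ZMod 2) : ZMod 2 := ∑ i, x i * z i

/-- The `k`-qubit Hadamard matrix, with entry `H_k(z, x) = (1/√(2ᵏ))·(−1)^(x·z)`. -/
noncomputable def Had (k : ℕ) :
    Matrix (Fin k → ZMod 2) (Fin k → ZMod 2) ℂ :=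
  fun z x => ((Real.sqrt (2 ^ k) : ℝ)⁻¹ : ℂ) * sgn (dotp x z)

/-- The operator `U_f`: `(U_f g)(x, z) = g(x, z ⊕ f(x))`. -/
def Uf {n m : ℕ} (f : (Fin n → ZMod 2) → (Fin m → ZMod 2))
    (g : (Fin n → ZMod 2) × (Fin m → ZMod 2) → ℂ) :
    (Fin n → ZMod 2) × (Fin m → ZMod 2) → ℂ :=
  fun p => g (p.1, p.2 + f p.1)

/-- The tensor product `H_n ⊗ H_m` acting on ℂ-valued functions on `𝔽₂ⁿ × 𝔽₂ᵐ`. -/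
noncomputable def HadTensorHad {n m : ℕ}
    (g : (Fin n → ZMod 2) × (Fin m → ZMod 2) → ℂ) :
    (Fin n → ZMod 2) × (Fin m → ZMod 2) → ℂ :=
  fun p => ∑ q : (Fin n → ZMod 2) × (Fin m → ZMod 2),
    Had n p.1 q.1 * Had m p.2 q.2 * g q

/-- The tensor product `H_n ⊗ I` acting on ℂ-valued functions on `𝔽₂ⁿ × 𝔽₂ᵐ`. -/
noncomputable def HadTensorId {n m : ℕ}
    (g : (Fin n → ZMod 2) × (Fin m → ZMod 2) → ℂ) :
    (Fin n → ZMod 2) × (Fin m → ZMod 2) → ℂ :=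
  fun p => ∑ x : Fin n → ZMod 2, Had n p.1 x * g (x, p.2)

/-- The basis vector `|0, y⟩` supported at `(0, y) ∈ 𝔽₂ⁿ × 𝔽₂ᵐ`. -/
def ketZeroY {n m : ℕ} (y : Fin m → ZMod 2) :
    (Fin n → ZMod 2) × (Fin m → ZMod 2) → ℂ :=
  fun p => if p = ((fun _ => 0), y) then 1 else 0

lemma sgn_add (a b : ZMod 2) : sgn (a + b) = sgn a * sgn b := by
  unfold sgn
  rw [← pow_add, neg_one_pow_eq_pow_mod_two (R := ℂ) (n := a.val + b.val), ← ZMod.val_add]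

lemma sgn_zero : sgn 0 = 1 := by simp [sgn]

lemma dotp_comm {k : ℕ} (x z : Fin k → ZMod 2) : dotp x z = dotp z x := by
  simp [dotp, mul_comm]

lemma dotp_zero_left {k : ℕ} (x : Fin k → ZMod 2) :
    dotp (fun _ => 0) x = 0 := by simp [dotp]

lemma dotp_add_right {k : ℕ} (x a b : Fin k → ZMod 2) :
    dotp x (a + b) = dotp x a + dotp x b := by
  simp [dotp, mul_add, Finset.sum_add_distrib]

/-- State evolution of the GPK algorithm: the state
`(H_n ⊗ I) U_f (H_n ⊗ H_m) |0, y⟩` has, at each `(z, w)`, component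
`[(1/2ⁿ) Σ_x (−1)^((f(x)·y) ⊕ (x·z))] · (1/√(2ᵐ))·(−1)^(y·w)`. -/
theorem gpk_state_evolution {n m : ℕ}
    (f : (Fin n → ZMod 2) → (Fin m → ZMod 2)) (y : Fin m → ZMod 2)
    (z : Fin n → ZMod 2) (w : Fin m → ZMod 2) :
    HadTensorId (Uf f (HadTensorHad (ketZeroY y))) (z, w) =
      (((2 : ℂ) ^ n)⁻¹ * ∑ x : Fin n → ZMod 2, sgn (dotp (f x) y + dotp x z)) *
        (((Real.sqrt (2 ^ m) : ℝ)⁻¹ : ℂ) * sgn (dotp y w)) := by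
  have key : ∀ q : (Fin n → ZMod 2) × (Fin m → ZMod 2),
      HadTensorHad (ketZeroY y) q = Had n q.1 (fun _ => 0) * Had m q.2 y := by
    intro q
    simp [HadTensorHad, ketZeroY, Fintype.sum_prod_type, mul_ite, mul_one, mul_zero,
      Prod.ext_iff, ite_and, Finset.sum_ite_eq', Finset.sum_ite_eq]
  have hc : ((Real.sqrt (2 ^ n) : ℝ) : ℂ) * ((Real.sqrt (2 ^ n) : ℝ) : ℂ) = (2 : ℂ) ^ n := by
    rw [← Complex.ofReal_mul, Real.mul_self_sqrt (by positivity)]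
    push_cast; ring
  simp only [HadTensorId, Uf, key]
  simp only [Had, dotp_zero_left, sgn_zero, mul_one]
  have : ∀ x : Fin n → ZMod 2,
      dotp y (w + f x) = dotp (f x) y + dotp y w := by
    intro x
    rw [dotp_add_right, dotp_comm y (f x)]; ring
  simp only [this, sgn_add, Finset.mul_sum]
  rw [Finset.sum_mul]
  refine Finset.sum_congr rfl fun x _ => ?_
  have h2 : ((2 : ℂ) ^ n)⁻¹ = (((Real.sqrt (2 ^ n) : ℝ))⁻¹ : ℂ) * (((Real.sqrt (2 ^ n) : ℝ))⁻¹ : ℂ) := by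
    rw [← mul_inv, hc]
  rw [h2]
  ring
end

section
/- (Correctness of the Bernstein–Vazirani algorithm.) Let r ∈ 𝔽₂ⁿ and let f : 𝔽₂ⁿ → 𝔽₂ be the linear function f(x) = r·x. Then for every z ∈ 𝔽₂ⁿ, (1/2ⁿ) Σ_{x ∈ 𝔽₂ⁿ} (−1)^( f(x) ⊕ (x·z) ) equals 1 if z = r and 0 otherwise. Hence the final state of the Bernstein–Vazirani algorithm is exactly |r⟩ₙ, and measuring it yields r with certainty. -/
lemma zmod2_ne_zero {a : ZMod 2} (h : a ≠ 0) : a = 1 := by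
  fin_cases a
  · exact absurd rfl h
  · rfl

lemma sgn_one : sgn 1 = -1 := by simp [sgn, ZMod.val_one]

lemma dotp_add_left {k : ℕ} (x y w : Fin k → ZMod 2) :
    dotp (x + y) w = dotp x w + dotp y w := by
  simp [dotp, add_mul, Finset.sum_add_distrib]

/-- The character `x ↦ (−1)^(x·w)`. -/
noncomputable def chi {k : ℕ} (w : Fin k → ZMod 2) : AddChar (Fin k → ZMod 2) ℂ where
  toFun x := sgn (dotp x w)
  map_zero_eq_one' := by simp [dotp, sgn]
  map_add_eq_mul' x y := by
    show sgn (dotp (x + y) w) = sgn (dotp x w) * sgn (dotp y w)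
    rw [dotp_add_left, sgn_add]

lemma chi_sum {k : ℕ} (w : Fin k → ZMod 2) (hw : w ≠ 0) :
    ∑ x : Fin k → ZMod 2, sgn (dotp x w) = 0 := by
  have h0 : chi w ≠ 0 := by
    intro h
    obtain ⟨i, hi⟩ := Function.ne_iff.mp hw
    have hi' : w i ≠ 0 := by simpa using hi
    have h1 : w i = 1 := zmod2_ne_zero hi'
    have h2 := congrFun (congrArg DFunLike.coe h) (Pi.single i 1)
    rw [AddChar.zero_apply] at h2
    have h3 : chi w (Pi.single i 1) = sgn (dotp (Pi.single i 1) w) := rfl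
    rw [h3, show dotp (Pi.single i 1) w = 1 by
      simp [dotp, Finset.sum_eq_single i, Pi.single_apply, h1]] at h2
    rw [sgn_one] at h2
    norm_num at h2
  have h := AddChar.sum_eq_zero_iff_ne_zero.mpr h0
  calc ∑ x : Fin k → ZMod 2, sgn (dotp x w) = ∑ x : Fin k → ZMod 2, chi w x := rfl
    _ = 0 := h

/-- Correctness of the Bernstein–Vazirani algorithm: if `f(x) = r·x`, then for
every `z`, `(1/2ⁿ) Σ_x (−1)^(f(x) ⊕ (x·z))` is `1` if `z = r` and `0`
otherwise, so the final state of the algorithm is exactly `|r⟩ₙ`. -/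
theorem bernstein_vazirani {n : ℕ} (r : Fin n → ZMod 2)
    (f : (Fin n → ZMod 2) → ZMod 2) (hf : ∀ x, f x = dotp r x)
    (z : Fin n → ZMod 2) :
    ((2 : ℂ) ^ n)⁻¹ * ∑ x : Fin n → ZMod 2, sgn (f x + dotp x z) =
      (if z = r then 1 else 0) := by
  have hdot : ∀ x, f x + dotp x z = dotp x (r + z) := by
    intro x
    rw [hf x]
    simp [dotp, mul_add, Finset.sum_add_distrib, mul_comm]
  simp_rw [hdot]
  by_cases h : z = r
  · subst h
    rw [show z + z = 0 from funext fun i => CharTwo.add_self_eq_zero _]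
    have hsum : ∑ x : Fin n → ZMod 2, sgn (dotp x 0) = (2 : ℂ) ^ n := by
      simp [dotp, sgn, Finset.card_univ]
    rw [hsum, if_pos rfl, inv_mul_cancel₀ (pow_ne_zero _ two_ne_zero)]
  · have hw : r + z ≠ 0 := by
      intro hc
      apply h
      funext i
      have h2 : r i + z i = 0 := congrFun hc i
      have : z i = r i := by
        have h4 : r i = -(z i) := eq_neg_of_add_eq_zero_left h2
        rw [CharTwo.neg_eq] at h4
        exact h4.symm
      exact this
    rw [chi_sum _ hw, mul_zero, if_neg h]
end
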